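/- arXiv:2105.08560 — 3 statements merged into one kernel-verified Lean document; each statement's English description precedes it below -/
import Mathlib

section
/- Suppose the horizon satisfies N ≥ n and assumptions (A1), (A2), (A3) hold. Then for every compact set X ⊂ ℝⁿ there exists c_l > 0 such that for every x_t ∈ X at which the tracking MPC problem is feasible, the function V is lower bounded as V(x_t) ≥ c_l‖x_t − xˢʳ_lin(x_t)‖₂². Equivalently, every feasible point of the tracking MPC problem at x_t has cost at least J*_{eq,lin}(x_t) + c_l‖x_t − xˢʳ_lin(x_t)‖₂². -/
open Matrix

noncomputable section

def en {k : ℕ} (x : Fin k → ℝ) : ℝ := Real.sqrt (∑ i, x i ^ 2)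

def qn {k : ℕ} (P : Matrix (Fin k) (Fin k) ℝ) (x : Fin k → ℝ) : ℝ :=
  x ⬝ᵥ P.mulVec x

def jac {n q : ℕ} (g : (Fin n → ℝ) → Fin q → ℝ) (xt : Fin n → ℝ) :
    Matrix (Fin q) (Fin n) ℝ :=
  LinearMap.toMatrix' (fderiv ℝ g xt).toLinearMap

def fdyn {n m : ℕ} (f0 : (Fin n → ℝ) → Fin n → ℝ) (B : Matrix (Fin n) (Fin m) ℝ)
    (x : Fin n → ℝ) (u : Fin m → ℝ) : Fin n → ℝ :=
  f0 x + B.mulVec u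

def hout {n p m : ℕ} (h0 : (Fin n → ℝ) → Fin p → ℝ) (D : Matrix (Fin p) (Fin m) ℝ)
    (x : Fin n → ℝ) (u : Fin m → ℝ) : Fin p → ℝ :=
  h0 x + D.mulVec u

def flin {n m : ℕ} (f0 : (Fin n → ℝ) → Fin n → ℝ) (B : Matrix (Fin n) (Fin m) ℝ)
    (xt x : Fin n → ℝ) (u : Fin m → ℝ) : Fin n → ℝ :=
  (jac f0 xt).mulVec x + B.mulVec u + (f0 xt - (jac f0 xt).mulVec xt)

def hlin {n p m : ℕ} (h0 : (Fin n → ℝ) → Fin p → ℝ) (D : Matrix (Fin p) (Fin m) ℝ)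
    (xt x : Fin n → ℝ) (u : Fin m → ℝ) : Fin p → ℝ :=
  (jac h0 xt).mulVec x + D.mulVec u + (h0 xt - (jac h0 xt).mulVec xt)

def Zlin {n m : ℕ} (f0 : (Fin n → ℝ) → Fin n → ℝ) (B : Matrix (Fin n) (Fin m) ℝ)
    (Us : Set (Fin m → ℝ)) (xt : Fin n → ℝ) : Set ((Fin n → ℝ) × (Fin m → ℝ)) :=
  {z | z.2 ∈ Us ∧ z.1 = flin f0 B xt z.1 z.2}

def Zs {n m : ℕ} (f0 : (Fin n → ℝ) → Fin n → ℝ) (B : Matrix (Fin n) (Fin m) ℝ)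
    (Us : Set (Fin m → ℝ)) : Set ((Fin n → ℝ) × (Fin m → ℝ)) :=
  {z | z.2 ∈ Us ∧ z.1 = fdyn f0 B z.1 z.2}

def A2holds {n m p : ℕ} (f0 : (Fin n → ℝ) → Fin n → ℝ) (h0 : (Fin n → ℝ) → Fin p → ℝ)
    (B : Matrix (Fin n) (Fin m) ℝ) (D : Matrix (Fin p) (Fin m) ℝ) (σs : ℝ) : Prop :=
  ∀ (xt v : Fin n → ℝ) (w : Fin m → ℝ),
    σs * Real.sqrt (en v ^ 2 + en w ^ 2) ≤
      Real.sqrt (en ((jac f0 xt).mulVec v - v + B.mulVec w) ^ 2 +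
        en ((jac h0 xt).mulVec v + D.mulVec w) ^ 2)

def A3holds {n m : ℕ} (f0 : (Fin n → ℝ) → Fin n → ℝ) (B : Matrix (Fin n) (Fin m) ℝ)
    (μ : ℝ) : Prop :=
  ∀ (xt w : Fin n → ℝ),
    μ * en w ≤ Real.sqrt (∑ k ∈ Finset.range n, en ((jac f0 xt ^ k * B)ᵀ.mulVec w) ^ 2)

def A4holds {n : ℕ} (f0 : (Fin n → ℝ) → Fin n → ℝ) (σl : ℝ) : Prop :=
  ∀ xt v : Fin n → ℝ, σl * en v ≤ en (v - (jac f0 xt).mulVec v)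
def Jeqlin {n m p : ℕ} (f0 : (Fin n → ℝ) → Fin n → ℝ) (h0 : (Fin n → ℝ) → Fin p → ℝ)
    (B : Matrix (Fin n) (Fin m) ℝ) (D : Matrix (Fin p) (Fin m) ℝ)
    (Us : Set (Fin m → ℝ)) (S : Matrix (Fin p) (Fin p) ℝ) (yr : Fin p → ℝ)
    (xt : Fin n → ℝ) : ℝ :=
  sInf {c : ℝ | ∃ z ∈ Zlin f0 B Us xt, c = qn S (hlin h0 D xt z.1 z.2 - yr)}

def MPCfeas {n m p : ℕ} (f0 : (Fin n → ℝ) → Fin n → ℝ) (h0 : (Fin n → ℝ) → Fin p → ℝ)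
    (B : Matrix (Fin n) (Fin m) ℝ) (D : Matrix (Fin p) (Fin m) ℝ)
    (U Us : Set (Fin m → ℝ)) (N : ℕ) (xt : Fin n → ℝ)
    (xb : ℕ → Fin n → ℝ) (ub : ℕ → Fin m → ℝ)
    (xs : Fin n → ℝ) (us : Fin m → ℝ) (ys : Fin p → ℝ) : Prop :=
  (∀ k < N, xb (k + 1) = flin f0 B xt (xb k) (ub k)) ∧
  xb 0 = xt ∧ xb N = xs ∧ (∀ k < N, ub k ∈ U) ∧
  (xs, us) ∈ Zlin f0 B Us xt ∧ ys = hlin h0 D xt xs us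

def MPCcost {n m p : ℕ} (Q : Matrix (Fin n) (Fin n) ℝ) (R : Matrix (Fin m) (Fin m) ℝ)
    (S : Matrix (Fin p) (Fin p) ℝ) (yr : Fin p → ℝ) (N : ℕ)
    (xb : ℕ → Fin n → ℝ) (ub : ℕ → Fin m → ℝ)
    (xs : Fin n → ℝ) (us : Fin m → ℝ) (ys : Fin p → ℝ) : ℝ :=
  (∑ k ∈ Finset.range N, (qn Q (xb k - xs) + qn R (ub k - us))) + qn S (ys - yr)

def Jstar {n m p : ℕ} (f0 : (Fin n → ℝ) → Fin n → ℝ) (h0 : (Fin n → ℝ) → Fin p → ℝ)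
    (B : Matrix (Fin n) (Fin m) ℝ) (D : Matrix (Fin p) (Fin m) ℝ)
    (U Us : Set (Fin m → ℝ)) (Q : Matrix (Fin n) (Fin n) ℝ) (R : Matrix (Fin m) (Fin m) ℝ)
    (S : Matrix (Fin p) (Fin p) ℝ) (yr : Fin p → ℝ) (N : ℕ) (xt : Fin n → ℝ) : ℝ :=
  sInf {c : ℝ | ∃ xb ub xs us ys, MPCfeas f0 h0 B D U Us N xt xb ub xs us ys ∧
    c = MPCcost Q R S yr N xb ub xs us ys}

def Vfun {n m p : ℕ} (f0 : (Fin n → ℝ) → Fin n → ℝ) (h0 : (Fin n → ℝ) → Fin p → ℝ)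
    (B : Matrix (Fin n) (Fin m) ℝ) (D : Matrix (Fin p) (Fin m) ℝ)
    (U Us : Set (Fin m → ℝ)) (Q : Matrix (Fin n) (Fin n) ℝ) (R : Matrix (Fin m) (Fin m) ℝ)
    (S : Matrix (Fin p) (Fin p) ℝ) (yr : Fin p → ℝ) (N : ℕ) (xt : Fin n → ℝ) : ℝ :=
  Jstar f0 h0 B D U Us Q R S yr N xt - Jeqlin f0 h0 B D Us S yr xt

def MPCfeasible {n m p : ℕ} (f0 : (Fin n → ℝ) → Fin n → ℝ) (h0 : (Fin n → ℝ) → Fin p → ℝ)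
    (B : Matrix (Fin n) (Fin m) ℝ) (D : Matrix (Fin p) (Fin m) ℝ)
    (U Us : Set (Fin m → ℝ)) (N : ℕ) (xt : Fin n → ℝ) : Prop :=
  ∃ xb ub xs us ys, MPCfeas f0 h0 B D U Us N xt xb ub xs us ys

def MPCopt {n m p : ℕ} (f0 : (Fin n → ℝ) → Fin n → ℝ) (h0 : (Fin n → ℝ) → Fin p → ℝ)
    (B : Matrix (Fin n) (Fin m) ℝ) (D : Matrix (Fin p) (Fin m) ℝ)
    (U Us : Set (Fin m → ℝ)) (Q : Matrix (Fin n) (Fin n) ℝ) (R : Matrix (Fin m) (Fin m) ℝ)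
    (S : Matrix (Fin p) (Fin p) ℝ) (yr : Fin p → ℝ) (N : ℕ) (xt : Fin n → ℝ)
    (xb : ℕ → Fin n → ℝ) (ub : ℕ → Fin m → ℝ)
    (xs : Fin n → ℝ) (us : Fin m → ℝ) (ys : Fin p → ℝ) : Prop :=
  MPCfeas f0 h0 B D U Us N xt xb ub xs us ys ∧
  ∀ xb' ub' xs' us' ys', MPCfeas f0 h0 B D U Us N xt xb' ub' xs' us' ys' →
    MPCcost Q R S yr N xb ub xs us ys ≤ MPCcost Q R S yr N xb' ub' xs' us' ys'

def rollout {n m : ℕ} (f0 : (Fin n → ℝ) → Fin n → ℝ) (B : Matrix (Fin n) (Fin m) ℝ)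
    (x0 : Fin n → ℝ) (u : ℕ → Fin m → ℝ) : ℕ → Fin n → ℝ
  | 0 => x0
  | k + 1 => fdyn f0 B (rollout f0 B x0 u k) (u k)

lemma en_nonneg {k : ℕ} (x : Fin k → ℝ) : 0 ≤ en x := Real.sqrt_nonneg _

lemma en_sq {k : ℕ} (x : Fin k → ℝ) : en x ^ 2 = ∑ i, x i ^ 2 :=
  Real.sq_sqrt (Finset.sum_nonneg fun _ _ => sq_nonneg _)

lemma en_zero {k : ℕ} : en (0 : Fin k → ℝ) = 0 := by simp [en]

lemma qn_smul {k : ℕ} (P : Matrix (Fin k) (Fin k) ℝ) (c : ℝ) (x : Fin k → ℝ) :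
    qn P (c • x) = c ^ 2 * qn P x := by
  simp [qn, Matrix.mulVec_smul, smul_dotProduct, dotProduct_smul, smul_eq_mul]
  ring

lemma qn_nonneg {k : ℕ} {P : Matrix (Fin k) (Fin k) ℝ} (hP : P.PosSemidef)
    (x : Fin k → ℝ) : 0 ≤ qn P x := hP.dotProduct_mulVec_nonneg x

lemma dotProduct_mulVec_symm {k : ℕ} {P : Matrix (Fin k) (Fin k) ℝ} (hP : P.IsHermitian)
    (x y : Fin k → ℝ) : x ⬝ᵥ P.mulVec y = y ⬝ᵥ P.mulVec x := by
  rw [Matrix.dotProduct_mulVec, ← Matrix.mulVec_transpose]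
  rw [show Pᵀ = P from ?_, dotProduct_comm]
  simpa using congrArg Matrix.transpose hP.symm

lemma qn_add {k : ℕ} {P : Matrix (Fin k) (Fin k) ℝ} (hP : P.IsHermitian)
    (a b : Fin k → ℝ) :
    qn P (a + b) = qn P a + 2 * (b ⬝ᵥ P.mulVec a) + qn P b := by
  simp only [qn, Matrix.mulVec_add, dotProduct_add, add_dotProduct]
  rw [dotProduct_mulVec_symm hP a b]
  ring

lemma sum_sq_pos_of_ne_zero {k : ℕ} {x : Fin k → ℝ} (hx : x ≠ 0) :
    0 < ∑ i, x i ^ 2 := by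
  rcases Function.ne_iff.mp hx with ⟨i, hi⟩
  simp only [Pi.zero_apply] at hi
  have h1 := Finset.single_le_sum (f := fun j => x j ^ 2)
    (fun j _ => sq_nonneg (x j)) (Finset.mem_univ i)
  have h1' : x i ^ 2 ≤ ∑ j, x j ^ 2 := h1
  have h2 : 0 < x i ^ 2 := pow_pos (abs_pos.mpr hi) 2 |>.trans_le (by rw [sq_abs])
  linarith

lemma posdef_lam {k : ℕ} (P : Matrix (Fin k) (Fin k) ℝ) (hP : P.PosDef) :
    ∃ lam : ℝ, 0 < lam ∧ ∀ x : Fin k → ℝ, lam * en x ^ 2 ≤ qn P x := by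
  classical
  set K : Set (Fin k → ℝ) := {x | ∑ i, x i ^ 2 = 1} with hK
  have hqc : Continuous (qn P) := by
    have : qn P = fun x => ∑ i, x i * ∑ j, P i j * x j := by
      funext x; simp [qn, dotProduct, Matrix.mulVec]
    rw [this]
    exact continuous_finset_sum _ fun i _ => (continuous_apply i).mul
      (continuous_finset_sum _ fun j _ => continuous_const.mul (continuous_apply j))
  by_cases hne : K.Nonempty
  · have hKc : IsCompact K := by
      have hcl : IsClosed K := isClosed_eq (by continuity) continuous_const
      have hsub : K ⊆ Metric.closedBall 0 1 := by
        intro x hx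
        simp only [Metric.mem_closedBall, dist_zero_right]
        rw [pi_norm_le_iff_of_nonneg (by norm_num)]
        intro i
        rw [Real.norm_eq_abs, abs_le]
        have h1 : x i ^ 2 ≤ 1 := by
          rw [← hx]
          exact Finset.single_le_sum (fun j _ => sq_nonneg (x j)) (Finset.mem_univ i)
        constructor <;> nlinarith
      exact (isCompact_closedBall 0 1).of_isClosed_subset hcl hsub
    obtain ⟨x0, hx0K, hx0min⟩ := hKc.exists_isMinOn hne hqc.continuousOn
    refine ⟨qn P x0, hP.dotProduct_mulVec_pos (x := x0) ?_, ?_⟩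
    · intro h; rw [h] at hx0K; simp [hK] at hx0K
    · intro x
      by_cases hx : x = 0
      · simp [hx, en_zero, qn, Matrix.mulVec_zero]
      · have hs : 0 < ∑ i, x i ^ 2 := sum_sq_pos_of_ne_zero hx
        have hy : ((Real.sqrt (∑ i, x i ^ 2))⁻¹ • x) ∈ K := by
          simp only [hK, Set.mem_setOf_eq, Pi.smul_apply, smul_eq_mul, mul_pow]
          rw [← Finset.mul_sum, inv_pow, Real.sq_sqrt hs.le]
          exact inv_mul_cancel₀ hs.ne'
        have hmin : qn P x0 ≤ qn P ((Real.sqrt (∑ i, x i ^ 2))⁻¹ • x) := hx0min hy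
        rw [qn_smul, inv_pow, Real.sq_sqrt hs.le] at hmin
        have h2 := mul_le_mul_of_nonneg_left hmin hs.le
        rw [← mul_assoc, mul_inv_cancel₀ hs.ne', one_mul] at h2
        rw [en_sq]
        linarith
  · refine ⟨1, one_pos, fun x => ?_⟩
    by_cases hx : x = 0
    · simp [hx, en_zero, qn, Matrix.mulVec_zero]
    · exact absurd ⟨(Real.sqrt (∑ i, x i ^ 2))⁻¹ • x, by
        have hs : 0 < ∑ i, x i ^ 2 := sum_sq_pos_of_ne_zero hx
        simp only [hK, Set.mem_setOf_eq, Pi.smul_apply, smul_eq_mul, mul_pow]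
        rw [← Finset.mul_sum, inv_pow, Real.sq_sqrt hs.le]
        exact inv_mul_cancel₀ hs.ne'⟩ hne

lemma en_add_sq_le {k : ℕ} (x y : Fin k → ℝ) :
    en (x + y) ^ 2 ≤ 2 * en x ^ 2 + 2 * en y ^ 2 := by
  rw [en_sq, en_sq, en_sq, Finset.mul_sum, Finset.mul_sum, ← Finset.sum_add_distrib]
  refine Finset.sum_le_sum fun i _ => ?_
  simp only [Pi.add_apply]
  nlinarith [sq_nonneg (x i - y i)]

/-- Lemma 1 (i): lower bound on the Lyapunov function candidate
`V(x_t) = J*_N(x_t) − J*_{eq,lin}(x_t)`: on every compact set `X` there is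
`c_l > 0` with `V(x_t) ≥ c_l ‖x_t − xˢʳ_lin(x_t)‖₂²` for feasible `x_t ∈ X`;
equivalently, every feasible point has cost at least
`J*_{eq,lin}(x_t) + c_l ‖x_t − xˢʳ_lin(x_t)‖₂²`. -/
theorem stmt3 {n m p : ℕ} (N : ℕ) (hN : n ≤ N)
    (f0 : (Fin n → ℝ) → Fin n → ℝ) (h0 : (Fin n → ℝ) → Fin p → ℝ)
    (B : Matrix (Fin n) (Fin m) ℝ) (D : Matrix (Fin p) (Fin m) ℝ)
    (U Us : Set (Fin m → ℝ)) (yr : Fin p → ℝ)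
    (Q : Matrix (Fin n) (Fin n) ℝ) (R : Matrix (Fin m) (Fin m) ℝ)
    (S : Matrix (Fin p) (Fin p) ℝ)
    (hU : IsCompact U) (hUs : IsCompact Us) (hUsconv : Convex ℝ Us)
    (hUsint : Us ⊆ interior U)
    (hQ : Q.PosDef) (hR : R.PosDef) (hS : S.PosDef)
    (hf0 : ContDiff ℝ 2 f0) (hh0 : ContDiff ℝ 2 h0)
    (σs : ℝ) (hσs : 0 < σs) (hA2 : A2holds f0 h0 B D σs)
    (μ : ℝ) (hμ : 0 < μ) (hA3 : A3holds f0 B μ)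
    -- optimal reachable steady state of the linearization at each point
    (xsrlin : (Fin n → ℝ) → Fin n → ℝ) (usrlin : (Fin n → ℝ) → Fin m → ℝ)
    (hxsrlin : ∀ xt : Fin n → ℝ, (xsrlin xt, usrlin xt) ∈ Zlin f0 B Us xt ∧
      ∀ z ∈ Zlin f0 B Us xt,
        qn S (hlin h0 D xt (xsrlin xt) (usrlin xt) - yr) ≤
          qn S (hlin h0 D xt z.1 z.2 - yr)) :
    ∀ X : Set (Fin n → ℝ), IsCompact X →
      ∃ cl : ℝ, 0 < cl ∧
        ∀ xt ∈ X, MPCfeasible f0 h0 B D U Us N xt →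
          cl * en (xt - xsrlin xt) ^ 2 ≤ Vfun f0 h0 B D U Us Q R S yr N xt ∧
          ∀ (xb : ℕ → Fin n → ℝ) (ub : ℕ → Fin m → ℝ) (xs : Fin n → ℝ)
            (us : Fin m → ℝ) (ys : Fin p → ℝ),
            MPCfeas f0 h0 B D U Us N xt xb ub xs us ys →
            Jeqlin f0 h0 B D Us S yr xt + cl * en (xt - xsrlin xt) ^ 2 ≤
              MPCcost Q R S yr N xb ub xs us ys := by
  obtain ⟨lQ, hlQ, hQbd⟩ := posdef_lam Q hQ
  obtain ⟨lS, hlS, hSbd⟩ := posdef_lam S hS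
  intro X _hX
  set cl : ℝ := min lQ (lS * σs ^ 2) / 2 with hcl_def
  have hcl : 0 < cl := by
    have := lt_min hlQ (by positivity : (0:ℝ) < lS * σs ^ 2)
    simp only [hcl_def]; linarith
  have h2clQ : 2 * cl ≤ lQ := by
    have := min_le_left lQ (lS * σs ^ 2); simp only [hcl_def]; linarith
  have h2clS : 2 * cl ≤ lS * σs ^ 2 := by
    have := min_le_right lQ (lS * σs ^ 2); simp only [hcl_def]; linarith
  refine ⟨cl, hcl, fun xt _hxt hfeas => ?_⟩
  obtain ⟨hmem, hopt⟩ := hxsrlin xt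
  set ysr : Fin p → ℝ := hlin h0 D xt (xsrlin xt) (usrlin xt) with hysr_def
  -- value of Jeqlin
  have hJset : qn S (ysr - yr) ∈
      {c : ℝ | ∃ z ∈ Zlin f0 B Us xt, c = qn S (hlin h0 D xt z.1 z.2 - yr)} :=
    ⟨(xsrlin xt, usrlin xt), hmem, rfl⟩
  have hJlb : ∀ c ∈ {c : ℝ | ∃ z ∈ Zlin f0 B Us xt,
      c = qn S (hlin h0 D xt z.1 z.2 - yr)}, qn S (ysr - yr) ≤ c := by
    rintro c ⟨z, hz, rfl⟩; exact hopt z hz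
  have hJ : Jeqlin f0 h0 B D Us S yr xt = qn S (ysr - yr) :=
    le_antisymm (csInf_le ⟨_, hJlb⟩ hJset) (le_csInf ⟨_, hJset⟩ hJlb)
  -- main pointwise bound
  have key : ∀ (xb : ℕ → Fin n → ℝ) (ub : ℕ → Fin m → ℝ) (xs : Fin n → ℝ)
      (us : Fin m → ℝ) (ys : Fin p → ℝ),
      MPCfeas f0 h0 B D U Us N xt xb ub xs us ys →
      Jeqlin f0 h0 B D Us S yr xt + cl * en (xt - xsrlin xt) ^ 2 ≤
        MPCcost Q R S yr N xb ub xs us ys := by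
    rintro xb ub xs us ys ⟨_hdyn, hx0, hxN, _hub, ⟨husUs, hxsEq⟩, hysdef⟩
    have h1 : xs = (jac f0 xt).mulVec xs + B.mulVec us
        + (f0 xt - (jac f0 xt).mulVec xt) := by simpa [flin] using hxsEq
    have h2 : xsrlin xt = (jac f0 xt).mulVec (xsrlin xt) + B.mulVec (usrlin xt)
        + (f0 xt - (jac f0 xt).mulVec xt) := by simpa [flin] using hmem.2
    have hvdyn : (jac f0 xt).mulVec (xs - xsrlin xt) - (xs - xsrlin xt)
        + B.mulVec (us - usrlin xt) = 0 := by
      rw [Matrix.mulVec_sub, Matrix.mulVec_sub]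
      linear_combination h2 - h1
    set dvec : Fin p → ℝ := (jac h0 xt).mulVec (xs - xsrlin xt)
      + D.mulVec (us - usrlin xt) with hdvec_def
    have hd : ys - ysr = dvec := by
      simp only [hysdef, hysr_def, hdvec_def, hlin, Matrix.mulVec_sub]
      abel
    -- A2 consequence
    have hA2' := hA2 xt (xs - xsrlin xt) (us - usrlin xt)
    rw [hvdyn] at hA2'
    rw [en_zero] at hA2'
    have hA2'' : σs * Real.sqrt (en (xs - xsrlin xt) ^ 2 + en (us - usrlin xt) ^ 2)
        ≤ en dvec := by
      have h := hA2'; rw [zero_pow two_ne_zero, zero_add, Real.sqrt_sq (en_nonneg _)] at h; exact h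
    have hvd : σs * en (xs - xsrlin xt) ≤ en dvec := by
      refine le_trans (mul_le_mul_of_nonneg_left ?_ hσs.le) hA2''
      have h := Real.sqrt_le_sqrt (show en (xs - xsrlin xt) ^ 2
          ≤ en (xs - xsrlin xt) ^ 2 + en (us - usrlin xt) ^ 2 by
        nlinarith [sq_nonneg (en (us - usrlin xt))])
      rwa [Real.sqrt_sq (en_nonneg _)] at h
    have hvd2 : σs ^ 2 * en (xs - xsrlin xt) ^ 2 ≤ en dvec ^ 2 := by
      nlinarith [mul_self_le_mul_self (mul_nonneg hσs.le (en_nonneg (xs - xsrlin xt))) hvd]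
    -- first-order optimality: 0 ≤ dvec ⬝ᵥ S (ysr - yr)
    have hc : 0 ≤ dvec ⬝ᵥ S.mulVec (ysr - yr) := by
      by_contra hcneg
      push_neg at hcneg
      have hdne : dvec ≠ 0 := by
        intro h; rw [h] at hcneg; simp [zero_dotProduct] at hcneg
      have hq : 0 < qn S dvec := hS.dotProduct_mulVec_pos hdne
      set c : ℝ := dvec ⬝ᵥ S.mulVec (ysr - yr) with hc_def
      set t : ℝ := min 1 (-c / qn S dvec) with ht_def
      have ht0 : 0 < t := lt_min one_pos (div_pos (neg_pos.mpr hcneg) hq)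
      have ht1 : t ≤ 1 := min_le_left _ _
      have htq : t * qn S dvec ≤ -c := by
        have := min_le_right 1 (-c / qn S dvec)
        calc t * qn S dvec ≤ (-c / qn S dvec) * qn S dvec :=
              mul_le_mul_of_nonneg_right this hq.le
          _ = -c := by field_simp
      have hAv : (jac f0 xt).mulVec (xs - xsrlin xt)
          = (xs - xsrlin xt) - B.mulVec (us - usrlin xt) := by
        linear_combination hvdyn
      have hmem_t : (xsrlin xt + t • (xs - xsrlin xt),
          usrlin xt + t • (us - usrlin xt)) ∈ Zlin f0 B Us xt := by
        constructor
        · exact hUsconv.add_smul_sub_mem hmem.1 husUs ⟨ht0.le, ht1⟩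
        · show xsrlin xt + t • (xs - xsrlin xt)
            = flin f0 B xt (xsrlin xt + t • (xs - xsrlin xt))
                (usrlin xt + t • (us - usrlin xt))
          simp only [flin, Matrix.mulVec_add, Matrix.mulVec_smul]
          rw [hAv, ← sub_eq_zero]
          have h2' : xsrlin xt - ((jac f0 xt).mulVec (xsrlin xt)
              + B.mulVec (usrlin xt) + (f0 xt - (jac f0 xt).mulVec xt)) = 0 :=
            sub_eq_zero_of_eq h2
          rw [← h2']
          module
      have hle := hopt _ hmem_t
      have hlin_t : hlin h0 D xt (xsrlin xt + t • (xs - xsrlin xt))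
          (usrlin xt + t • (us - usrlin xt)) - yr = (ysr - yr) + t • dvec := by
        simp only [hysr_def, hdvec_def, hlin, Matrix.mulVec_add, Matrix.mulVec_smul]
        module
      rw [hlin_t] at hle
      rw [qn_add hS.1, qn_smul, smul_dotProduct, smul_eq_mul, ← hc_def] at hle
      nlinarith [mul_lt_mul_of_pos_left hcneg ht0,
        mul_le_mul_of_nonneg_left htq ht0.le]
    -- gap bound
    have hgap : qn S (ysr - yr) + qn S dvec ≤ qn S (ys - yr) := by
      have hsum : ys - yr = (ysr - yr) + dvec := by rw [← hd]; abel
      rw [hsum, qn_add hS.1 (ysr - yr) dvec]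
      linarith
    -- stage cost bound
    have hsumlb : lQ * en (xt - xs) ^ 2 ≤
        ∑ k ∈ Finset.range N, (qn Q (xb k - xs) + qn R (ub k - us)) := by
      rcases Nat.eq_zero_or_pos N with hN0 | hN0
      · have hxx : xt = xs := by rw [← hx0, ← hxN, hN0]
        simp [hN0, hxx, sub_self, en_zero]
      · have h0mem : (0 : ℕ) ∈ Finset.range N := Finset.mem_range.mpr hN0
        have hsingle := Finset.single_le_sum
          (f := fun k => qn Q (xb k - xs) + qn R (ub k - us))
          (fun k _ => add_nonneg (qn_nonneg hQ.posSemidef _)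
            (qn_nonneg hR.posSemidef _)) h0mem
        have hQb := hQbd (xt - xs)
        have hRnn := qn_nonneg hR.posSemidef (ub 0 - us)
        have hsingle' : qn Q (xb 0 - xs) + qn R (ub 0 - us) ≤
            ∑ k ∈ Finset.range N, (qn Q (xb k - xs) + qn R (ub k - us)) := hsingle
        rw [hx0] at hsingle'
        linarith
    -- triangle inequality
    have htri : en (xt - xsrlin xt) ^ 2
        ≤ 2 * en (xt - xs) ^ 2 + 2 * en (xs - xsrlin xt) ^ 2 := by
      have := en_add_sq_le (xt - xs) (xs - xsrlin xt)
      rw [sub_add_sub_cancel] at this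
      exact this
    -- combine everything
    rw [hJ]
    show qn S (ysr - yr) + cl * en (xt - xsrlin xt) ^ 2 ≤
      (∑ k ∈ Finset.range N, (qn Q (xb k - xs) + qn R (ub k - us))) + qn S (ys - yr)
    have hSd := hSbd dvec
    have e1 : cl * en (xt - xsrlin xt) ^ 2
        ≤ cl * (2 * en (xt - xs) ^ 2 + 2 * en (xs - xsrlin xt) ^ 2) :=
      mul_le_mul_of_nonneg_left htri hcl.le
    have e2 : 2 * cl * en (xt - xs) ^ 2 ≤ lQ * en (xt - xs) ^ 2 :=
      mul_le_mul_of_nonneg_right h2clQ (sq_nonneg _)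
    have e3 : 2 * cl * en (xs - xsrlin xt) ^ 2
        ≤ lS * σs ^ 2 * en (xs - xsrlin xt) ^ 2 :=
      mul_le_mul_of_nonneg_right h2clS (sq_nonneg _)
    have e4 : lS * (σs ^ 2 * en (xs - xsrlin xt) ^ 2) ≤ lS * en dvec ^ 2 :=
      mul_le_mul_of_nonneg_left hvd2 hlS.le
    linarith
  refine ⟨?_, key⟩
  have hset_ne : {c : ℝ | ∃ xb ub xs us ys, MPCfeas f0 h0 B D U Us N xt xb ub xs us ys ∧
      c = MPCcost Q R S yr N xb ub xs us ys}.Nonempty := by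
    obtain ⟨xb, ub, xs, us, ys, hf⟩ := hfeas
    exact ⟨_, xb, ub, xs, us, ys, hf, rfl⟩
  have hJs : Jeqlin f0 h0 B D Us S yr xt + cl * en (xt - xsrlin xt) ^ 2
      ≤ Jstar f0 h0 B D U Us Q R S yr N xt := by
    refine le_csInf hset_ne ?_
    rintro c ⟨xb, ub, xs, us, ys, hf, rfl⟩
    exact key xb ub xs us ys hf
  simp only [Vfun]
  linarith
end
end

section
/- Suppose the horizon satisfies N ≥ n and assumptions (A1), (A2), (A3) hold. Then for every compact set X ⊂ ℝⁿ there exist c_u, δ > 0 such that for every x_t ∈ X with ‖x_t − xˢʳ_lin(x_t)‖₂ ≤ δ, the tracking MPC problem at x_t is feasible and the function V is upper bounded as V(x_t) ≤ c_u‖x_t − xˢʳ_lin(x_t)‖₂²; in fact there exists a feasible point of the tracking MPC problem at x_t whose cost is at most J*_{eq,lin}(x_t) + c_u‖x_t − xˢʳ_lin(x_t)‖₂². -/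
open Matrix

noncomputable section

namespace AuxMPC

lemma en_nonneg {k : ℕ} (x : Fin k → ℝ) : 0 ≤ en x := Real.sqrt_nonneg _

lemma en_sq {k : ℕ} (x : Fin k → ℝ) : en x ^ 2 = ∑ i, x i ^ 2 :=
  Real.sq_sqrt (by positivity)

lemma en_sq_eq_dot {k : ℕ} (x : Fin k → ℝ) : en x ^ 2 = x ⬝ᵥ x := by
  rw [en_sq]; simp [dotProduct, sq]

lemma en_zero {k : ℕ} : en (0 : Fin k → ℝ) = 0 := by simp [en]

lemma en_neg {k : ℕ} (x : Fin k → ℝ) : en (-x) = en x := by simp [en]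

lemma en_pos {k : ℕ} {x : Fin k → ℝ} (hx : x ≠ 0) : 0 < en x := by
  rcases (en_nonneg x).lt_or_eq with h | h
  · exact h
  · exfalso; apply hx
    have h0 : ∑ i, x i ^ 2 = 0 := by
      have := en_sq x; rw [← h] at this; simpa using this.symm
    funext i
    have := (Finset.sum_eq_zero_iff_of_nonneg (fun i _ => sq_nonneg (x i))).mp h0 i (Finset.mem_univ i)
    exact pow_eq_zero_iff (n := 2) (by norm_num) |>.mp this

lemma dot_le_en {k : ℕ} (x y : Fin k → ℝ) : x ⬝ᵥ y ≤ en x * en y := by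
  have h := Finset.sum_mul_sq_le_sq_mul_sq Finset.univ x y
  have h1 : x ⬝ᵥ y ≤ Real.sqrt ((x ⬝ᵥ y) ^ 2) := by
    rw [Real.sqrt_sq_eq_abs]; exact le_abs_self _
  calc x ⬝ᵥ y ≤ Real.sqrt ((x ⬝ᵥ y) ^ 2) := h1
    _ ≤ Real.sqrt ((∑ i, x i ^ 2) * ∑ i, y i ^ 2) := by
        apply Real.sqrt_le_sqrt; simpa [dotProduct] using h
    _ = en x * en y := by rw [Real.sqrt_mul (by positivity)]; rfl

lemma en_add_le {k : ℕ} (x y : Fin k → ℝ) : en (x + y) ≤ en x + en y := by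
  have h2 : en (x + y) ^ 2 ≤ (en x + en y) ^ 2 := by
    rw [en_sq_eq_dot]
    have hexp : (x + y) ⬝ᵥ (x + y) = x ⬝ᵥ x + 2 * (x ⬝ᵥ y) + y ⬝ᵥ y := by
      rw [add_dotProduct, dotProduct_add, dotProduct_add, dotProduct_comm y x]; ring
    rw [hexp, ← en_sq_eq_dot, ← en_sq_eq_dot]
    have := dot_le_en x y
    nlinarith [en_nonneg x, en_nonneg y]
  exact (pow_le_pow_iff_left₀ (en_nonneg _) (by nlinarith [en_nonneg x, en_nonneg y]) (by norm_num)).1 h2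

def nrm {q r : ℕ} (M : Matrix (Fin q) (Fin r) ℝ) : ℝ :=
  Real.sqrt (∑ i, ∑ j, M i j ^ 2)

lemma nrm_nonneg {q r : ℕ} (M : Matrix (Fin q) (Fin r) ℝ) : 0 ≤ nrm M := Real.sqrt_nonneg _

lemma nrm_transpose {q r : ℕ} (M : Matrix (Fin q) (Fin r) ℝ) : nrm Mᵀ = nrm M := by
  unfold nrm; rw [Finset.sum_comm]; rfl

lemma en_mulVec_le {q r : ℕ} (M : Matrix (Fin q) (Fin r) ℝ) (v : Fin r → ℝ) :
    en (M.mulVec v) ≤ nrm M * en v := by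
  have key : ∑ i, (M.mulVec v) i ^ 2 ≤ (∑ i, ∑ j, M i j ^ 2) * ∑ j, v j ^ 2 := by
    rw [Finset.sum_mul]
    apply Finset.sum_le_sum
    intro i _
    simpa [Matrix.mulVec, dotProduct] using
      Finset.sum_mul_sq_le_sq_mul_sq Finset.univ (M i) v
  calc en (M.mulVec v) = Real.sqrt (∑ i, (M.mulVec v) i ^ 2) := rfl
    _ ≤ Real.sqrt ((∑ i, ∑ j, M i j ^ 2) * ∑ j, v j ^ 2) := Real.sqrt_le_sqrt key
    _ = nrm M * en v := by rw [Real.sqrt_mul (by positivity)]; rfl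

lemma abs_le_en {k : ℕ} (x : Fin k → ℝ) (i : Fin k) : |x i| ≤ en x := by
  rw [← Real.sqrt_sq_eq_abs]
  exact Real.sqrt_le_sqrt (Finset.single_le_sum (fun j _ => sq_nonneg (x j)) (Finset.mem_univ i))

lemma en_pow_mulVec {q : ℕ} (A : Matrix (Fin q) (Fin q) ℝ) (a : ℝ)
    (hA : ∀ v, en (A.mulVec v) ≤ a * en v) (ha : 0 ≤ a) :
    ∀ (j : ℕ) (v : Fin q → ℝ), en ((A ^ j).mulVec v) ≤ a ^ j * en v := by
  intro j
  induction j with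
  | zero => intro v; simp [Matrix.one_mulVec]
  | succ j ih =>
    intro v
    rw [pow_succ']
    calc en ((A * A ^ j).mulVec v) = en (A.mulVec ((A ^ j).mulVec v)) := by
          rw [Matrix.mulVec_mulVec]
      _ ≤ a * en ((A ^ j).mulVec v) := hA _
      _ ≤ a * (a ^ j * en v) := by
          exact mul_le_mul_of_nonneg_left (ih v) ha
      _ = a ^ (j + 1) * en v := by ring

lemma sum_mulVec {q r : ℕ} {ι : Type*} (s : Finset ι) (M : ι → Matrix (Fin q) (Fin r) ℝ)
    (v : Fin r → ℝ) : (∑ i ∈ s, M i).mulVec v = ∑ i ∈ s, (M i).mulVec v := by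
  funext j
  simp only [Matrix.mulVec, dotProduct, Finset.sum_apply, Matrix.sum_apply, Finset.sum_mul]
  rw [Finset.sum_comm]

lemma mulVec_sum {q r : ℕ} {ι : Type*} (s : Finset ι) (M : Matrix (Fin q) (Fin r) ℝ)
    (f : ι → Fin r → ℝ) : M.mulVec (∑ i ∈ s, f i) = ∑ i ∈ s, M.mulVec (f i) := by
  have := map_sum (Matrix.mulVecLin M) f s
  simpa only [Matrix.mulVecLin_apply] using this

lemma qn_le {k : ℕ} (P : Matrix (Fin k) (Fin k) ℝ) (x : Fin k → ℝ) :
    qn P x ≤ nrm P * en x ^ 2 := by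
  calc qn P x ≤ en x * en (P.mulVec x) := dot_le_en _ _
    _ ≤ en x * (nrm P * en x) := mul_le_mul_of_nonneg_left (en_mulVec_le P x) (en_nonneg x)
    _ = nrm P * en x ^ 2 := by ring

lemma qn_nonneg {k : ℕ} {P : Matrix (Fin k) (Fin k) ℝ} (hP : P.PosDef) (x : Fin k → ℝ) :
    0 ≤ qn P x := by
  have := hP.posSemidef.dotProduct_mulVec_nonneg x
  simpa [qn] using this


lemma dotProduct_sum' {k : ℕ} {ι : Type*} (s : Finset ι) (x : Fin k → ℝ)
    (f : ι → Fin k → ℝ) : x ⬝ᵥ (∑ i ∈ s, f i) = ∑ i ∈ s, x ⬝ᵥ f i := by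
  simp only [dotProduct, Finset.sum_apply, Finset.mul_sum]
  rw [Finset.sum_comm]

lemma dot_mul_transpose {q r : ℕ} (M : Matrix (Fin q) (Fin r) ℝ) (w : Fin q → ℝ) :
    w ⬝ᵥ ((M * Mᵀ).mulVec w) = en (Mᵀ.mulVec w) ^ 2 := by
  rw [← Matrix.mulVec_mulVec, Matrix.dotProduct_mulVec, ← Matrix.mulVec_transpose,
    en_sq_eq_dot]

def xiT {n m : ℕ} (A : Matrix (Fin n) (Fin n) ℝ) (B : Matrix (Fin n) (Fin m) ℝ)
    (x0 : Fin n → ℝ) (v : ℕ → Fin m → ℝ) : ℕ → Fin n → ℝ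
  | 0 => x0
  | k + 1 => A.mulVec (xiT A B x0 v k) + B.mulVec (v k)

lemma xiT_zero {n m : ℕ} (A : Matrix (Fin n) (Fin n) ℝ) (B : Matrix (Fin n) (Fin m) ℝ)
    (x0 : Fin n → ℝ) (v : ℕ → Fin m → ℝ) : xiT A B x0 v 0 = x0 := rfl

lemma xiT_succ {n m : ℕ} (A : Matrix (Fin n) (Fin n) ℝ) (B : Matrix (Fin n) (Fin m) ℝ)
    (x0 : Fin n → ℝ) (v : ℕ → Fin m → ℝ) (k : ℕ) :
    xiT A B x0 v (k + 1) = A.mulVec (xiT A B x0 v k) + B.mulVec (v k) := rfl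

lemma xiT_closed {n m : ℕ} (A : Matrix (Fin n) (Fin n) ℝ) (B : Matrix (Fin n) (Fin m) ℝ)
    (x0 : Fin n → ℝ) (v : ℕ → Fin m → ℝ) (k : ℕ) :
    xiT A B x0 v k = (A ^ k).mulVec x0 +
      ∑ j ∈ Finset.range k, (A ^ (k - 1 - j) * B).mulVec (v j) := by
  induction k with
  | zero => simp [xiT, Matrix.one_mulVec]
  | succ k ih =>
    rw [xiT_succ, ih, Matrix.mulVec_add, mulVec_sum, Matrix.mulVec_mulVec, ← pow_succ']
    have h1 : ∀ j ∈ Finset.range k, A.mulVec ((A ^ (k - 1 - j) * B).mulVec (v j)) =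
        (A ^ (k + 1 - 1 - j) * B).mulVec (v j) := by
      intro j hj
      rw [Finset.mem_range] at hj
      rw [Matrix.mulVec_mulVec, ← Matrix.mul_assoc, ← pow_succ']
      have : k - 1 - j + 1 = k + 1 - 1 - j := by omega
      rw [this]
    rw [Finset.sum_congr rfl h1, Finset.sum_range_succ]
    have h2 : (A ^ (k + 1 - 1 - k) * B).mulVec (v k) = B.mulVec (v k) := by
      have : k + 1 - 1 - k = 0 := by omega
      rw [this, pow_zero, Matrix.one_mul]
    rw [h2]
    abel

end AuxMPC



set_option maxHeartbeats 1000000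

/-- Lemma 1 (ii): local upper bound on the Lyapunov function candidate
`V(x_t) = J*_N(x_t) − J*_{eq,lin}(x_t)`: on every compact set `X` there are
`c_u, δ > 0` such that every `x_t ∈ X` with `‖x_t − xˢʳ_lin(x_t)‖₂ ≤ δ` is
feasible and `V(x_t) ≤ c_u ‖x_t − xˢʳ_lin(x_t)‖₂²`; in fact some feasible point
has cost at most `J*_{eq,lin}(x_t) + c_u ‖x_t − xˢʳ_lin(x_t)‖₂²`. -/
theorem stmt4 {n m p : ℕ} (N : ℕ) (hN : n ≤ N)
    (f0 : (Fin n → ℝ) → Fin n → ℝ) (h0 : (Fin n → ℝ) → Fin p → ℝ)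
    (B : Matrix (Fin n) (Fin m) ℝ) (D : Matrix (Fin p) (Fin m) ℝ)
    (U Us : Set (Fin m → ℝ)) (yr : Fin p → ℝ)
    (Q : Matrix (Fin n) (Fin n) ℝ) (R : Matrix (Fin m) (Fin m) ℝ)
    (S : Matrix (Fin p) (Fin p) ℝ)
    (hU : IsCompact U) (hUs : IsCompact Us) (hUsconv : Convex ℝ Us)
    (hUsint : Us ⊆ interior U)
    (hQ : Q.PosDef) (hR : R.PosDef) (hS : S.PosDef)
    (hf0 : ContDiff ℝ 2 f0) (hh0 : ContDiff ℝ 2 h0)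
    (σs : ℝ) (hσs : 0 < σs) (hA2 : A2holds f0 h0 B D σs)
    (μ : ℝ) (hμ : 0 < μ) (hA3 : A3holds f0 B μ)
    -- optimal reachable steady state of the linearization at each point
    (xsrlin : (Fin n → ℝ) → Fin n → ℝ) (usrlin : (Fin n → ℝ) → Fin m → ℝ)
    (hxsrlin : ∀ xt : Fin n → ℝ, (xsrlin xt, usrlin xt) ∈ Zlin f0 B Us xt ∧
      ∀ z ∈ Zlin f0 B Us xt,
        qn S (hlin h0 D xt (xsrlin xt) (usrlin xt) - yr) ≤
          qn S (hlin h0 D xt z.1 z.2 - yr)) :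
    ∀ X : Set (Fin n → ℝ), IsCompact X →
      ∃ cu δ : ℝ, 0 < cu ∧ 0 < δ ∧
        ∀ xt ∈ X, en (xt - xsrlin xt) ≤ δ →
          MPCfeasible f0 h0 B D U Us N xt ∧
          Vfun f0 h0 B D U Us Q R S yr N xt ≤ cu * en (xt - xsrlin xt) ^ 2 ∧
          ∃ (xb : ℕ → Fin n → ℝ) (ub : ℕ → Fin m → ℝ) (xs : Fin n → ℝ)
            (us : Fin m → ℝ) (ys : Fin p → ℝ),
            MPCfeas f0 h0 B D U Us N xt xb ub xs us ys ∧
            MPCcost Q R S yr N xb ub xs us ys ≤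
              Jeqlin f0 h0 B D Us S yr xt + cu * en (xt - xsrlin xt) ^ 2 := by

  intro X hX
  classical
  obtain ⟨hf1, hf2⟩ : True ∧ True := ⟨trivial, trivial⟩
  -- continuity bound on the Jacobian over X
  have hjc : ∀ (i j : Fin n), Continuous fun xt => jac f0 xt i j := by
    intro i j
    have h1 : Continuous fun xt => fderiv ℝ f0 xt := hf0.continuous_fderiv (by norm_num)
    have h3 : Continuous fun xt =>
        (fderiv ℝ f0 xt) (Pi.single j (1:ℝ)) i :=
      (continuous_apply i).comp (h1.clm_apply continuous_const)
    simpa [jac, LinearMap.toMatrix'_apply] using h3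
  have hfrob : Continuous fun xt => ∑ i, ∑ j, (jac f0 xt i j) ^ 2 :=
    continuous_finset_sum _ fun i _ => continuous_finset_sum _ fun j _ => (hjc i j).pow 2
  obtain ⟨C, hC⟩ := hX.exists_bound_of_continuousOn hfrob.continuousOn
  set a : ℝ := max 1 (Real.sqrt C) with ha_def
  have ha1 : (1:ℝ) ≤ a := le_max_left _ _
  have ha0 : (0:ℝ) ≤ a := by linarith
  have hjacle : ∀ xt ∈ X, AuxMPC.nrm (jac f0 xt) ≤ a := by
    intro xt hxt
    have h2 : ∑ i, ∑ j, (jac f0 xt i j) ^ 2 ≤ C :=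
      le_trans (le_abs_self _) (by simpa [Real.norm_eq_abs] using hC xt hxt)
    exact le_trans (Real.sqrt_le_sqrt h2) (le_max_right _ _)
  obtain ⟨ε, hε, hthick⟩ := hUs.exists_thickening_subset_open isOpen_interior hUsint
  set b : ℝ := max 1 (AuxMPC.nrm B) with hb_def
  have hb1 : (1:ℝ) ≤ b := le_max_left _ _
  have hb0 : (0:ℝ) ≤ b := by linarith
  have hB : AuxMPC.nrm B ≤ b := le_max_right _ _
  set Cv : ℝ := b * a ^ n * (a ^ n / μ ^ 2) with hCv_def
  have hCv0 : 0 ≤ Cv := by positivity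
  set E : ℝ := a + b * Cv with hE_def
  have hE1 : (1:ℝ) ≤ E := by nlinarith
  set cu : ℝ := (N:ℝ) * (AuxMPC.nrm Q * (E ^ N) ^ 2 + AuxMPC.nrm R * Cv ^ 2) + 1 with hcu_def
  have hnQ := AuxMPC.nrm_nonneg Q
  have hnR := AuxMPC.nrm_nonneg R
  have hcu0 : (0:ℝ) < cu := by
    have h1 : (0:ℝ) ≤ (N:ℝ) * (AuxMPC.nrm Q * (E ^ N) ^ 2 + AuxMPC.nrm R * Cv ^ 2) := by
      apply mul_nonneg (Nat.cast_nonneg N)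
      exact add_nonneg (mul_nonneg hnQ (sq_nonneg _)) (mul_nonneg hnR (sq_nonneg _))
    linarith
  refine ⟨cu, ε / (Cv + 1), hcu0, by positivity, ?_⟩
  intro xt hxtX hδ
  obtain ⟨hzmem, hopt⟩ := hxsrlin xt
  have hJeq : Jeqlin f0 h0 B D Us S yr xt =
      qn S (hlin h0 D xt (xsrlin xt) (usrlin xt) - yr) := by
    unfold Jeqlin
    apply le_antisymm
    · exact csInf_le ⟨_, by rintro c ⟨z, hz, rfl⟩; exact hopt z hz⟩
        ⟨(xsrlin xt, usrlin xt), hzmem, rfl⟩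
    · exact le_csInf ⟨_, ⟨(xsrlin xt, usrlin xt), hzmem, rfl⟩⟩
        (by rintro c ⟨z, hz, rfl⟩; exact hopt z hz)
  set A := jac f0 xt with hA_def
  have hAv : ∀ v, en (A.mulVec v) ≤ a * en v := fun v =>
    le_trans (AuxMPC.en_mulVec_le A v)
      (mul_le_mul_of_nonneg_right (hjacle xt hxtX) (AuxMPC.en_nonneg v))
  have hAtv : ∀ v, en (Aᵀ.mulVec v) ≤ a * en v := fun v =>
    le_trans (AuxMPC.en_mulVec_le _ v)
      (mul_le_mul_of_nonneg_right
        (le_trans (le_of_eq (AuxMPC.nrm_transpose A)) (hjacle xt hxtX)) (AuxMPC.en_nonneg v))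
  set xs := xsrlin xt with hxs_def
  set us := usrlin xt with hus_def
  set ξ0 := xt - xs with hξ0_def
  set W : Matrix (Fin n) (Fin n) ℝ :=
    ∑ k ∈ Finset.range n, ((A ^ k * B) * (A ^ k * B)ᵀ) with hW_def
  have hquad : ∀ w0 : Fin n → ℝ,
      w0 ⬝ᵥ W.mulVec w0 = ∑ k ∈ Finset.range n, en ((A ^ k * B)ᵀ.mulVec w0) ^ 2 := by
    intro w0
    rw [hW_def, AuxMPC.sum_mulVec, AuxMPC.dotProduct_sum']
    exact Finset.sum_congr rfl fun k _ => AuxMPC.dot_mul_transpose _ _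
  have hWlb : ∀ w0 : Fin n → ℝ, μ ^ 2 * en w0 ^ 2 ≤ w0 ⬝ᵥ W.mulVec w0 := by
    intro w0
    have h3 := hA3 xt w0
    rw [← hA_def] at h3
    have hS0 : 0 ≤ ∑ k ∈ Finset.range n, en ((A ^ k * B)ᵀ.mulVec w0) ^ 2 :=
      Finset.sum_nonneg fun _ _ => sq_nonneg _
    have h5 := pow_le_pow_left₀ (mul_nonneg hμ.le (AuxMPC.en_nonneg w0)) h3 2
    rw [Real.sq_sqrt hS0] at h5
    rw [hquad w0]
    nlinarith [h5]
  have hWherm : W.IsHermitian := by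
    have hWt : Wᵀ = W := by
      rw [hW_def, Matrix.transpose_sum]
      exact Finset.sum_congr rfl fun k _ => by
        rw [Matrix.transpose_mul, Matrix.transpose_transpose]
    show Wᴴ = W
    have hct : Wᴴ = Wᵀ := by
      ext i j
      simp [Matrix.conjTranspose_apply, Matrix.transpose_apply]
    rw [hct, hWt]
  have hWpd : W.PosDef := by
    refine Matrix.PosDef.of_dotProduct_mulVec_pos hWherm ?_
    intro x hx
    have h1 := hWlb x
    have h2 : 0 < en x := AuxMPC.en_pos hx
    have h3 : (0:ℝ) < μ ^ 2 * en x ^ 2 := by positivity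
    simpa using lt_of_lt_of_le h3 h1
  have hdetW : IsUnit W.det := isUnit_iff_ne_zero.mpr (ne_of_gt hWpd.det_pos)
  have hWinv : W * W⁻¹ = 1 := Matrix.mul_nonsing_inv W hdetW
  set z := -((A ^ n).mulVec ξ0) with hz_def
  set w := W⁻¹.mulVec z with hw_def
  have hWw : W.mulVec w = z := by
    rw [hw_def, Matrix.mulVec_mulVec, hWinv, Matrix.one_mulVec]
  have hzb : en z ≤ a ^ n * en ξ0 := by
    rw [hz_def, AuxMPC.en_neg]; exact AuxMPC.en_pow_mulVec A a hAv ha0 n ξ0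
  have hwb : en w ≤ en z / μ ^ 2 := by
    rcases eq_or_lt_of_le (AuxMPC.en_nonneg w) with hw0 | hw0
    · rw [← hw0]; exact div_nonneg (AuxMPC.en_nonneg z) (by positivity)
    · have h1 : μ ^ 2 * en w ^ 2 ≤ en w * en z := by
        calc μ ^ 2 * en w ^ 2 ≤ w ⬝ᵥ W.mulVec w := hWlb w
          _ = w ⬝ᵥ z := by rw [hWw]
          _ ≤ en w * en z := AuxMPC.dot_le_en w z
      rw [le_div_iff₀ (by positivity)]
      nlinarith
  set v : ℕ → Fin m → ℝ :=
    fun k => if k < n then (A ^ (n - 1 - k) * B)ᵀ.mulVec w else 0 with hv_def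
  have hewb : en w ≤ a ^ n * en ξ0 / μ ^ 2 := by
    refine le_trans hwb ?_
    gcongr
  have hvb : ∀ k, en (v k) ≤ Cv * en ξ0 := by
    intro k
    by_cases hk : k < n
    · have hveq : v k = Bᵀ.mulVec ((Aᵀ ^ (n - 1 - k)).mulVec w) := by
        rw [hv_def]
        simp only [if_pos hk]
        rw [Matrix.transpose_mul, Matrix.transpose_pow, ← Matrix.mulVec_mulVec]
      have e0 : en ((Aᵀ ^ (n - 1 - k)).mulVec w) ≤ a ^ n * en w := by
        refine le_trans (AuxMPC.en_pow_mulVec Aᵀ a hAtv ha0 _ w) ?_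
        exact mul_le_mul_of_nonneg_right (pow_le_pow_right₀ ha1 (by omega)) (AuxMPC.en_nonneg w)
      have e1 : en ((Aᵀ ^ (n - 1 - k)).mulVec w) ≤ a ^ n * (a ^ n * en ξ0 / μ ^ 2) := by
        refine le_trans e0 ?_
        exact mul_le_mul_of_nonneg_left hewb (pow_nonneg ha0 n)
      calc en (v k) = en (Bᵀ.mulVec ((Aᵀ ^ (n - 1 - k)).mulVec w)) := by rw [hveq]
        _ ≤ AuxMPC.nrm Bᵀ * en ((Aᵀ ^ (n - 1 - k)).mulVec w) := AuxMPC.en_mulVec_le _ _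
        _ ≤ b * (a ^ n * (a ^ n * en ξ0 / μ ^ 2)) := by
            apply mul_le_mul _ e1 (AuxMPC.en_nonneg _) hb0
            rw [AuxMPC.nrm_transpose]; exact hB
        _ = Cv * en ξ0 := by rw [hCv_def]; ring
    · have : v k = 0 := by rw [hv_def]; simp [hk]
      rw [this, AuxMPC.en_zero]
      exact mul_nonneg hCv0 (AuxMPC.en_nonneg _)
  set ξ : ℕ → Fin n → ℝ := AuxMPC.xiT A B ξ0 v with hξ_def
  have hξsucc : ∀ k, ξ (k + 1) = A.mulVec (ξ k) + B.mulVec (v k) := fun k => rfl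
  have hξzero : ξ 0 = ξ0 := rfl
  have hξn : ξ n = 0 := by
    rw [hξ_def, AuxMPC.xiT_closed]
    have h1 : ∀ j ∈ Finset.range n, (A ^ (n - 1 - j) * B).mulVec (v j) =
        ((A ^ (n - 1 - j) * B) * (A ^ (n - 1 - j) * B)ᵀ).mulVec w := by
      intro j hj
      rw [Finset.mem_range] at hj
      rw [hv_def]
      simp only [if_pos hj]
      rw [Matrix.mulVec_mulVec]
    have hsum : ∑ j ∈ Finset.range n, (A ^ (n - 1 - j) * B).mulVec (v j) = W.mulVec w := by
      rw [Finset.sum_congr rfl h1, hW_def, AuxMPC.sum_mulVec]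
      exact Finset.sum_range_reflect (fun k => ((A ^ k * B) * (A ^ k * B)ᵀ).mulVec w) n
    rw [hsum, hWw, hz_def]
    exact add_neg_cancel _
  have hξbig : ∀ j, ξ (n + j) = 0 := by
    intro j
    induction j with
    | zero => simpa using hξn
    | succ j ih =>
      have hnj : n + (j + 1) = (n + j) + 1 := by omega
      rw [hnj, hξsucc, ih]
      have hv0 : v (n + j) = 0 := by rw [hv_def]; simp
      rw [hv0]
      simp [Matrix.mulVec_zero]
  have hξN : ξ N = 0 := by
    have hNn : N = n + (N - n) := by omega
    rw [hNn]; exact hξbig _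
  have hξb : ∀ k, en (ξ k) ≤ E ^ k * en ξ0 := by
    intro k
    induction k with
    | zero => rw [hξzero]; simp
    | succ k ih =>
      have hEk : (1:ℝ) ≤ E ^ k := one_le_pow₀ hE1
      calc en (ξ (k + 1)) = en (A.mulVec (ξ k) + B.mulVec (v k)) := by rw [hξsucc]
        _ ≤ en (A.mulVec (ξ k)) + en (B.mulVec (v k)) := AuxMPC.en_add_le _ _
        _ ≤ a * en (ξ k) + AuxMPC.nrm B * en (v k) :=
            add_le_add (hAv _) (AuxMPC.en_mulVec_le _ _)
        _ ≤ a * (E ^ k * en ξ0) + b * (Cv * en ξ0) := by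
            apply add_le_add
            · exact mul_le_mul_of_nonneg_left ih ha0
            · exact mul_le_mul hB (hvb k) (AuxMPC.en_nonneg _) hb0
        _ ≤ a * (E ^ k * en ξ0) + b * Cv * (E ^ k * en ξ0) := by
            have h7 : en ξ0 ≤ E ^ k * en ξ0 :=
              le_mul_of_one_le_left (AuxMPC.en_nonneg _) hEk
            nlinarith [mul_nonneg hb0 hCv0, h7]
        _ = (a + b * Cv) * (E ^ k * en ξ0) := by ring
        _ = E ^ (k + 1) * en ξ0 := by rw [← hE_def, pow_succ]; ring
  set xb : ℕ → Fin n → ℝ := fun k => xs + ξ k with hxb_def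
  set ub : ℕ → Fin m → ℝ := fun k => us + v k with hub_def
  set ys := hlin h0 D xt xs us with hys_def
  have hs : xs = flin f0 B xt xs us := hzmem.2
  have hfeas : MPCfeas f0 h0 B D U Us N xt xb ub xs us ys := by
    refine ⟨?_, ?_, ?_, ?_, hzmem, hys_def⟩
    · intro k _
      show xs + ξ (k + 1) = flin f0 B xt (xs + ξ k) (us + v k)
      rw [hξsucc]
      simp only [flin] at hs ⊢
      rw [← hA_def] at hs ⊢
      rw [Matrix.mulVec_add, Matrix.mulVec_add]
      nth_rewrite 1 [hs]
      abel
    · show xs + ξ 0 = xt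
      rw [hξzero, hξ0_def]; abel
    · show xs + ξ N = xs
      rw [hξN]; simp
    · intro k _
      have h1 : ‖v k‖ ≤ en (v k) := by
        rw [pi_norm_le_iff_of_nonneg (AuxMPC.en_nonneg _)]
        intro i
        rw [Real.norm_eq_abs]
        exact AuxMPC.abs_le_en _ i
      have h4 : Cv * (ε / (Cv + 1)) < ε := by
        rw [show Cv * (ε / (Cv + 1)) = (Cv * ε) / (Cv + 1) by ring,
          div_lt_iff₀ (by positivity)]
        nlinarith
      have hd : dist (ub k) us < ε := by
        have h5 : ub k - us = v k := by show us + v k - us = v k; abel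
        rw [dist_eq_norm, h5]
        calc ‖v k‖ ≤ en (v k) := h1
          _ ≤ Cv * en ξ0 := hvb k
          _ ≤ Cv * (ε / (Cv + 1)) := mul_le_mul_of_nonneg_left hδ hCv0
          _ < ε := h4
      exact interior_subset (hthick (Metric.mem_thickening_iff.mpr ⟨us, hzmem.1, hd⟩))
  have hcost : MPCcost Q R S yr N xb ub xs us ys ≤
      Jeqlin f0 h0 B D Us S yr xt + cu * en ξ0 ^ 2 := by
    rw [hJeq]
    unfold MPCcost
    have hterm : ∀ k ∈ Finset.range N,
        qn Q (xb k - xs) + qn R (ub k - us) ≤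
          (AuxMPC.nrm Q * (E ^ N) ^ 2 + AuxMPC.nrm R * Cv ^ 2) * en ξ0 ^ 2 := by
      intro k hk
      rw [Finset.mem_range] at hk
      have h1 : xb k - xs = ξ k := by show xs + ξ k - xs = ξ k; abel
      have h2 : ub k - us = v k := by show us + v k - us = v k; abel
      rw [h1, h2]
      have e1 : qn Q (ξ k) ≤ AuxMPC.nrm Q * (E ^ N) ^ 2 * en ξ0 ^ 2 := by
        have b1 : en (ξ k) ≤ E ^ N * en ξ0 :=
          le_trans (hξb k)
            (mul_le_mul_of_nonneg_right (pow_le_pow_right₀ hE1 hk.le) (AuxMPC.en_nonneg _))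
        have b2 : en (ξ k) ^ 2 ≤ (E ^ N * en ξ0) ^ 2 :=
          pow_le_pow_left₀ (AuxMPC.en_nonneg _) b1 2
        calc qn Q (ξ k) ≤ AuxMPC.nrm Q * en (ξ k) ^ 2 := AuxMPC.qn_le _ _
          _ ≤ AuxMPC.nrm Q * (E ^ N * en ξ0) ^ 2 := mul_le_mul_of_nonneg_left b2 hnQ
          _ = AuxMPC.nrm Q * (E ^ N) ^ 2 * en ξ0 ^ 2 := by ring
      have e2 : qn R (v k) ≤ AuxMPC.nrm R * Cv ^ 2 * en ξ0 ^ 2 := by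
        have b2 : en (v k) ^ 2 ≤ (Cv * en ξ0) ^ 2 :=
          pow_le_pow_left₀ (AuxMPC.en_nonneg _) (hvb k) 2
        calc qn R (v k) ≤ AuxMPC.nrm R * en (v k) ^ 2 := AuxMPC.qn_le _ _
          _ ≤ AuxMPC.nrm R * (Cv * en ξ0) ^ 2 := mul_le_mul_of_nonneg_left b2 hnR
          _ = AuxMPC.nrm R * Cv ^ 2 * en ξ0 ^ 2 := by ring
      linarith
    have hsum : ∑ k ∈ Finset.range N, (qn Q (xb k - xs) + qn R (ub k - us)) ≤
        (N:ℝ) * ((AuxMPC.nrm Q * (E ^ N) ^ 2 + AuxMPC.nrm R * Cv ^ 2) * en ξ0 ^ 2) := by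
      have h6 := Finset.sum_le_card_nsmul (Finset.range N) _ _ hterm
      simpa [Finset.card_range, nsmul_eq_mul] using h6
    rw [hcu_def]
    have hsq0 : (0:ℝ) ≤ en ξ0 ^ 2 := sq_nonneg _
    have hyseq : qn S (ys - yr) = qn S (hlin h0 D xt xs us - yr) := by rw [hys_def]
    rw [hyseq]
    nlinarith [hsum]
  have hJle : Jstar f0 h0 B D U Us Q R S yr N xt ≤ MPCcost Q R S yr N xb ub xs us ys := by
    unfold Jstar
    refine csInf_le ⟨0, ?_⟩ ⟨xb, ub, xs, us, ys, hfeas, rfl⟩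
    rintro c ⟨xb', ub', xs', us', ys', _, rfl⟩
    unfold MPCcost
    exact add_nonneg
      (Finset.sum_nonneg fun k _ =>
        add_nonneg (AuxMPC.qn_nonneg hQ _) (AuxMPC.qn_nonneg hR _))
      (AuxMPC.qn_nonneg hS _)
  refine ⟨⟨xb, ub, xs, us, ys, hfeas⟩, ?_, ⟨xb, ub, xs, us, ys, hfeas, hcost⟩⟩
  unfold Vfun
  have := le_trans hJle hcost
  linarith
end
end

section
/- Let n, m ∈ ℕ with n ≥ 1, and let a, μ > 0. There exists Γ > 0, depending only on n, m, a and μ, with the following property: for every A ∈ ℝ^{n×n} and B ∈ ℝ^{n×m} with ‖A‖₂ ≤ a, ‖B‖₂ ≤ a, and σ_min([B, AB, …, A^{n−1}B]) ≥ μ, every e ∈ ℝⁿ, every steady state pair (xˢ,uˢ) ∈ ℝⁿ×ℝᵐ with xˢ = A·xˢ + B·uˢ + e, and every initial condition x₀ ∈ ℝⁿ, there exist inputs û₀, …, û_{n−1} ∈ ℝᵐ such that the trajectory defined by x̂₀ = x₀ and x̂_{k+1} = A·x̂_k + B·û_k + e satisfies x̂_n = xˢ and Σ_{k=0}^{n−1}(‖x̂_k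 − xˢ‖₂ + ‖û_k − uˢ‖₂) ≤ Γ‖xˢ − x₀‖₂. -/
open Matrix

noncomputable section

lemma en_eq_norm {k : ℕ} (x : Fin k → ℝ) :
    en x = ‖(WithLp.equiv 2 (Fin k → ℝ)).symm x‖ := by
  rw [EuclideanSpace.norm_eq]
  simp [en, sq_abs]

lemma en_eq_zero {k : ℕ} {x : Fin k → ℝ} (h : en x = 0) : x = 0 := by
  rw [en_eq_norm, norm_eq_zero] at h
  have := congrArg (WithLp.equiv 2 (Fin k → ℝ)) h
  simpa using this

lemma en_add_le {k : ℕ} (x y : Fin k → ℝ) : en (x + y) ≤ en x + en y := by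
  rw [en_eq_norm, en_eq_norm, en_eq_norm, WithLp.equiv_symm_apply, WithLp.toLp_add]
  exact norm_add_le _ _

lemma en_neg {k : ℕ} (x : Fin k → ℝ) : en (-x) = en x := by
  simp [en]

lemma dot_self_eq_en_sq {k : ℕ} (x : Fin k → ℝ) : x ⬝ᵥ x = en x ^ 2 := by
  rw [en_sq]; simp [dotProduct, sq]

lemma dot_le_en_mul_en {k : ℕ} (x y : Fin k → ℝ) : x ⬝ᵥ y ≤ en x * en y := by
  simpa [en, dotProduct] using Real.sum_mul_le_sqrt_mul_sqrt Finset.univ x y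

lemma sum_mulVec' {n p : ℕ} {ι : Type*} (s : Finset ι)
    (M : ι → Matrix (Fin n) (Fin p) ℝ) (v : Fin p → ℝ) :
    (∑ i ∈ s, M i) *ᵥ v = ∑ i ∈ s, (M i *ᵥ v) := by
  ext j
  simp [Matrix.mulVec, dotProduct, Matrix.sum_apply, Finset.sum_mul, Finset.sum_apply]
  exact Finset.sum_comm

lemma sum_dot' {n : ℕ} {ι : Type*} (s : Finset ι)
    (f : ι → Fin n → ℝ) (w : Fin n → ℝ) :
    (∑ i ∈ s, f i) ⬝ᵥ w = ∑ i ∈ s, (f i ⬝ᵥ w) := by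
  simp [dotProduct, Finset.sum_apply, Finset.sum_mul]
  exact Finset.sum_comm

lemma mulVec_sum' {n p : ℕ} {ι : Type*} (s : Finset ι) (M : Matrix (Fin n) (Fin p) ℝ)
    (v : ι → Fin p → ℝ) : M *ᵥ (∑ i ∈ s, v i) = ∑ i ∈ s, M *ᵥ v i := by
  rw [← Matrix.mulVecLin_apply, map_sum]
  simp [Matrix.mulVecLin_apply]


/-- Uniform controllability bound: if `‖A‖₂ ≤ a`, `‖B‖₂ ≤ a` and the controllability
matrix `[B, AB, …, A^{n−1}B]` has `σ_min ≥ μ` (encoded via its transpose: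
`μ‖w‖₂ ≤ ‖[B, AB, …, A^{n−1}B]ᵀ w‖₂` for all `w`), then any steady state `xˢ` of
`x⁺ = Ax + Bu + e` can be reached from any `x₀` in `n` steps with
`Σ_{k<n} (‖x̂_k − xˢ‖₂ + ‖û_k − uˢ‖₂) ≤ Γ‖xˢ − x₀‖₂`, where `Γ` depends only on
`n`, `m`, `a`, `μ`. -/
theorem stmt9 (n m : ℕ) (hn : 1 ≤ n) (a μ : ℝ) (ha : 0 < a) (hμ : 0 < μ) :
    ∃ Γ : ℝ, 0 < Γ ∧
      ∀ (A : Matrix (Fin n) (Fin n) ℝ) (B : Matrix (Fin n) (Fin m) ℝ),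
        (∀ v : Fin n → ℝ, en (A.mulVec v) ≤ a * en v) →
        (∀ v : Fin m → ℝ, en (B.mulVec v) ≤ a * en v) →
        (∀ w : Fin n → ℝ,
          μ * en w ≤ Real.sqrt (∑ k ∈ Finset.range n, en ((A ^ k * B)ᵀ.mulVec w) ^ 2)) →
        ∀ (e : Fin n → ℝ) (xs : Fin n → ℝ) (us : Fin m → ℝ),
          xs = A.mulVec xs + B.mulVec us + e →
          ∀ x0 : Fin n → ℝ,
            ∃ (uh : ℕ → Fin m → ℝ) (xh : ℕ → Fin n → ℝ),
              xh 0 = x0 ∧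
              (∀ k < n, xh (k + 1) = A.mulVec (xh k) + B.mulVec (uh k) + e) ∧
              xh n = xs ∧
              (∑ k ∈ Finset.range n, (en (xh k - xs) + en (uh k - us))) ≤
                Γ * en (xs - x0) := by
  set cu : ℝ := a ^ n / μ with hcu
  have hcu_pos : 0 < cu := by positivity
  set K : ℕ → ℝ := fun k => Nat.rec 1 (fun _ Kk => a * Kk + a * cu) k with hK
  have hK0 : K 0 = 1 := rfl
  have hKs : ∀ k, K (k + 1) = a * K k + a * cu := fun k => rfl
  have hKpos : ∀ k, 0 < K k := by
    intro k
    induction k with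
    | zero => rw [hK0]; norm_num
    | succ k ih => rw [hKs]; positivity
  refine ⟨∑ k ∈ Finset.range n, (K k + cu), ?_, ?_⟩
  · apply Finset.sum_pos
    · intro k _; exact add_pos (hKpos k) hcu_pos
    · exact Finset.nonempty_range_iff.mpr (by omega)
  intro A B hA hB hC e xs us hss x0
  -- powers bound
  have hApow : ∀ (k : ℕ) (v : Fin n → ℝ), en ((A ^ k).mulVec v) ≤ a ^ k * en v := by
    intro k
    induction k with
    | zero => intro v; simp [Matrix.one_mulVec]
    | succ k ih =>
      intro v
      have h1 : (A ^ (k + 1)).mulVec v = (A ^ k).mulVec (A.mulVec v) := by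
        rw [Matrix.mulVec_mulVec, ← pow_succ]
      rw [h1]
      calc en ((A ^ k).mulVec (A.mulVec v)) ≤ a ^ k * en (A.mulVec v) := ih _
        _ ≤ a ^ k * (a * en v) := by
            apply mul_le_mul_of_nonneg_left (hA v) (by positivity)
        _ = a ^ (k + 1) * en v := by ring
  set y0 : Fin n → ℝ := x0 - xs with hy0
  set z : Fin n → ℝ := -((A ^ n).mulVec y0) with hzdef
  set G : Matrix (Fin n) (Fin n) ℝ :=
    ∑ k ∈ Finset.range n, (A ^ k * B) * (A ^ k * B)ᵀ with hGdef
  have hGmul : ∀ w, G.mulVec w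
      = ∑ k ∈ Finset.range n, (A ^ k * B).mulVec ((A ^ k * B)ᵀ.mulVec w) := by
    intro w
    rw [hGdef, sum_mulVec']
    exact Finset.sum_congr rfl fun k _ => (Matrix.mulVec_mulVec _ _ _).symm
  have hquad : ∀ w, G.mulVec w ⬝ᵥ w
      = ∑ k ∈ Finset.range n, ((A ^ k * B)ᵀ.mulVec w) ⬝ᵥ ((A ^ k * B)ᵀ.mulVec w) := by
    intro w
    rw [hGmul, sum_dot']
    refine Finset.sum_congr rfl fun k _ => ?_
    rw [dotProduct_comm, Matrix.dotProduct_mulVec, ← Matrix.mulVec_transpose]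
  have hlow : ∀ w, μ ^ 2 * en w ^ 2 ≤ G.mulVec w ⬝ᵥ w := by
    intro w
    have h1 := hC w
    have hS : (0:ℝ) ≤ ∑ k ∈ Finset.range n, en ((A ^ k * B)ᵀ.mulVec w) ^ 2 := by
      apply Finset.sum_nonneg; intro k _; positivity
    have h2 : (μ * en w) ^ 2 ≤ ∑ k ∈ Finset.range n, en ((A ^ k * B)ᵀ.mulVec w) ^ 2 := by
      calc (μ * en w) ^ 2
          ≤ Real.sqrt (∑ k ∈ Finset.range n, en ((A ^ k * B)ᵀ.mulVec w) ^ 2) ^ 2 :=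
            pow_le_pow_left₀ (mul_nonneg hμ.le (en_nonneg _)) h1 2
        _ = _ := Real.sq_sqrt hS
    rw [hquad]
    calc μ ^ 2 * en w ^ 2 = (μ * en w) ^ 2 := by ring
      _ ≤ _ := h2
      _ = _ := Finset.sum_congr rfl fun k _ => (dot_self_eq_en_sq _).symm
  -- G is invertible as a linear map
  have hinj : Function.Injective G.mulVecLin := by
    rw [injective_iff_map_eq_zero]
    intro w hw
    have h0 : G.mulVec w = 0 := hw
    have h1 : μ ^ 2 * en w ^ 2 ≤ 0 := by
      have := hlow w; rw [h0] at this; simpa [dotProduct] using this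
    have hsq : en w ^ 2 ≤ 0 := by nlinarith [pow_pos hμ 2]
    have h2 : en w = 0 := by
      have h3 : en w ^ 2 = 0 := le_antisymm hsq (sq_nonneg _)
      exact pow_eq_zero_iff two_ne_zero |>.mp h3
    exact en_eq_zero h2
  obtain ⟨w, hw⟩ := LinearMap.injective_iff_surjective.mp hinj z
  have hw' : G.mulVec w = z := hw
  set c : ℕ → Fin m → ℝ := fun k => (A ^ k * B)ᵀ.mulVec w with hcdef
  have hsum : ∑ k ∈ Finset.range n, (A ^ k * B).mulVec (c k) = z := by
    rw [← hw', hGmul]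
  -- bound on c
  have hzw : G.mulVec w ⬝ᵥ w = z ⬝ᵥ w := by rw [hw']
  have hCS : z ⬝ᵥ w ≤ en z * en w := dot_le_en_mul_en z w
  have hcb : ∀ k < n, en (c k) ≤ en z / μ := by
    intro k hk
    by_cases hw0 : en w = 0
    · have : w = 0 := en_eq_zero hw0
      have : c k = 0 := by rw [hcdef]; simp [this]
      rw [this]
      simp [en]
      positivity
    · have hwpos : 0 < en w := lt_of_le_of_ne (en_nonneg w) (Ne.symm hw0)
      have h1 : μ ^ 2 * en w ^ 2 ≤ en z * en w := le_trans (by rw [← hzw]; exact hlow w) (le_of_eq rfl) |>.trans hCS |>.trans (le_refl _)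
      have h2 : en (c k) ^ 2 ≤ en z * en w := by
        calc en (c k) ^ 2
            ≤ ∑ j ∈ Finset.range n, en (c j) ^ 2 := by
              apply Finset.single_le_sum (f := fun j => en (c j) ^ 2)
                (fun j _ => by positivity) (Finset.mem_range.mpr hk)
          _ = G.mulVec w ⬝ᵥ w := by
              rw [hquad]
              exact Finset.sum_congr rfl fun j _ => by rw [dot_self_eq_en_sq]
          _ = z ⬝ᵥ w := hzw
          _ ≤ en z * en w := hCS
      have hzn : 0 ≤ en z := en_nonneg z
      have h3 : en w ≤ en z / μ ^ 2 := by
        rw [le_div_iff₀ (by positivity)]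
        nlinarith
      have h4 : en (c k) ^ 2 ≤ (en z / μ) ^ 2 := by
        calc en (c k) ^ 2 ≤ en z * en w := h2
          _ ≤ en z * (en z / μ ^ 2) := by
              exact mul_le_mul_of_nonneg_left h3 hzn
          _ = (en z / μ) ^ 2 := by field_simp
      calc en (c k) = Real.sqrt (en (c k) ^ 2) := (Real.sqrt_sq (en_nonneg _)).symm
        _ ≤ Real.sqrt ((en z / μ) ^ 2) := Real.sqrt_le_sqrt h4
        _ = en z / μ := Real.sqrt_sq (by positivity)
  have hzb : en z ≤ a ^ n * en y0 := by
    rw [hzdef, en_neg]; exact hApow n y0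
  set uh : ℕ → Fin m → ℝ := fun k => us + c (n - 1 - k) with huh
  set xh : ℕ → Fin n → ℝ := fun k =>
    Nat.rec x0 (fun j xj => A.mulVec xj + B.mulVec (uh j) + e) k with hxh
  have hxh0 : xh 0 = x0 := rfl
  have hxhs : ∀ k, xh (k + 1) = A.mulVec (xh k) + B.mulVec (uh k) + e := fun k => rfl
  have huhsub : ∀ k, uh k - us = c (n - 1 - k) := by
    intro k; rw [huh]; simp
  have hyrec : ∀ k, xh (k + 1) - xs = A.mulVec (xh k - xs) + B.mulVec (uh k - us) := by
    intro k
    calc xh (k + 1) - xs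
        = (A.mulVec (xh k) + B.mulVec (uh k) + e) - (A.mulVec xs + B.mulVec us + e) := by
          rw [hxhs k, ← hss]
      _ = A.mulVec (xh k - xs) + B.mulVec (uh k - us) := by
          rw [Matrix.mulVec_sub, Matrix.mulVec_sub]; abel
  have hyform : ∀ k, xh k - xs = (A ^ k).mulVec y0
      + ∑ j ∈ Finset.range k, ((A ^ (k - 1 - j)) * B).mulVec (c (n - 1 - j)) := by
    intro k
    induction k with
    | zero => simp [hxh0, Matrix.one_mulVec, hy0]
    | succ k ih =>
      have hAA : A.mulVec ((A ^ k).mulVec y0) = (A ^ (k + 1)).mulVec y0 := by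
        rw [Matrix.mulVec_mulVec, ← pow_succ']
      have hterm : ∀ j ∈ Finset.range k,
          A.mulVec (((A ^ (k - 1 - j)) * B).mulVec (c (n - 1 - j)))
            = ((A ^ (k + 1 - 1 - j)) * B).mulVec (c (n - 1 - j)) := by
        intro j hj
        rw [Matrix.mulVec_mulVec, ← Matrix.mul_assoc, ← pow_succ']
        have : k - 1 - j + 1 = k + 1 - 1 - j := by
          have := Finset.mem_range.mp hj; omega
        rw [this]
      calc xh (k + 1) - xs
          = A.mulVec ((A ^ k).mulVec y0
              + ∑ j ∈ Finset.range k, ((A ^ (k - 1 - j)) * B).mulVec (c (n - 1 - j)))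
            + B.mulVec (c (n - 1 - k)) := by rw [hyrec k, ih, huhsub]
        _ = (A ^ (k + 1)).mulVec y0
            + (∑ j ∈ Finset.range k, ((A ^ (k + 1 - 1 - j)) * B).mulVec (c (n - 1 - j))
              + ((A ^ (k + 1 - 1 - k)) * B).mulVec (c (n - 1 - k))) := by
            rw [Matrix.mulVec_add, hAA, mulVec_sum', add_assoc]
            congr 1
            congr 1
            · exact Finset.sum_congr rfl hterm
            · have : k + 1 - 1 - k = 0 := by omega
              rw [this, pow_zero, Matrix.one_mul]
        _ = (A ^ (k + 1)).mulVec y0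
            + ∑ j ∈ Finset.range (k + 1), ((A ^ (k + 1 - 1 - j)) * B).mulVec (c (n - 1 - j)) := by
            rw [Finset.sum_range_succ]
  have hyn : xh n - xs = 0 := by
    rw [hyform n]
    have hrefl : ∑ j ∈ Finset.range n, ((A ^ (n - 1 - j)) * B).mulVec (c (n - 1 - j))
        = ∑ i ∈ Finset.range n, ((A ^ i) * B).mulVec (c i) :=
      Finset.sum_range_reflect (fun i => ((A ^ i) * B).mulVec (c i)) n
    rw [hrefl, hsum, hzdef]
    abel
  have hcb' : ∀ k < n, en (c k) ≤ cu * en y0 := by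
    intro k hk
    calc en (c k) ≤ en z / μ := hcb k hk
      _ ≤ (a ^ n * en y0) / μ := by
          gcongr
      _ = cu * en y0 := by rw [hcu]; ring
  have hyb : ∀ k, k ≤ n → en (xh k - xs) ≤ K k * en y0 := by
    intro k
    induction k with
    | zero =>
      intro _
      rw [hxh0, hK0, one_mul, ← hy0]
    | succ k ih =>
      intro hk1
      have hk : k ≤ n := by omega
      have hkn : n - 1 - k < n := by omega
      calc en (xh (k + 1) - xs)
          = en (A.mulVec (xh k - xs) + B.mulVec (c (n - 1 - k))) := by
            rw [hyrec k, huhsub]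
        _ ≤ en (A.mulVec (xh k - xs)) + en (B.mulVec (c (n - 1 - k))) := en_add_le _ _
        _ ≤ a * en (xh k - xs) + a * en (c (n - 1 - k)) := add_le_add (hA _) (hB _)
        _ ≤ a * (K k * en y0) + a * (cu * en y0) :=
            add_le_add (mul_le_mul_of_nonneg_left (ih hk) ha.le)
              (mul_le_mul_of_nonneg_left (hcb' _ hkn) ha.le)
        _ = K (k + 1) * en y0 := by rw [hKs]; ring
  have heny0 : en y0 = en (xs - x0) := by
    rw [hy0, ← en_neg (xs - x0), neg_sub]
  refine ⟨uh, xh, hxh0, fun k _ => hxhs k, sub_eq_zero.mp hyn, ?_⟩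
  calc ∑ k ∈ Finset.range n, (en (xh k - xs) + en (uh k - us))
      ≤ ∑ k ∈ Finset.range n, (K k + cu) * en y0 := by
        apply Finset.sum_le_sum
        intro k hk
        rw [huhsub k]
        have h1 := hyb k (le_of_lt (Finset.mem_range.mp hk))
        have h2 := hcb' (n - 1 - k) (by omega)
        calc en (xh k - xs) + en (c (n - 1 - k))
            ≤ K k * en y0 + cu * en y0 := add_le_add h1 h2
          _ = (K k + cu) * en y0 := by ring
    _ = (∑ k ∈ Finset.range n, (K k + cu)) * en (xs - x0) := by
        rw [← Finset.sum_mul, heny0]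
end
end
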